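/- Define γ : sl_n(ℂ) → (sl_n(ℂ))^∨ (real dual) by γ(g)(h) = i·tr(q(g)·p(h)), where p(h) = (h − h*)/2 and q(g) = (g + g*)/2. Then the Chevalley–Eilenberg coboundary of γ, with sl_n(ℂ) acting on its real dual by (x·θ)(y) = −θ([x,y]), satisfies (dγ)(x₁,x₂)(x₃) = 2i·tr(q(x₁)[q(x₂),q(x₃)]) for all x₁, x₂, x₃ ∈ sl_n(ℂ). -/
import Mathlib


open Matrix Complex

/-- The skew-Hermitian projection `p(A) = (A - Aᴴ)/2`. -/
noncomputable def pSkew (n : ℕ) (A : Matrix (Fin n) (Fin n) ℂ) : Matrix (Fin n) (Fin n) ℂ :=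
  ((1 : ℂ) / 2) • (A - Aᴴ)

/-- The Hermitian projection `q(A) = (A + Aᴴ)/2`. -/
noncomputable def qHerm (n : ℕ) (A : Matrix (Fin n) (Fin n) ℂ) : Matrix (Fin n) (Fin n) ℂ :=
  ((1 : ℂ) / 2) • (A + Aᴴ)

/-- The cochain `γ(g)(h) = i·tr(q(g)·p(h))`. -/
noncomputable def gammaCochain (n : ℕ) (g h : Matrix (Fin n) (Fin n) ℂ) : ℂ :=
  Complex.I * (qHerm n g * pSkew n h).trace

/-- The Chevalley–Eilenberg coboundary of `γ` is the 3-form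
`(x₁,x₂) ↦ (x₃ ↦ 2i·tr(q(x₁)[q(x₂),q(x₃)]))`. -/
theorem d_gamma_eq (n : ℕ) (x₁ x₂ x₃ : Matrix (Fin n) (Fin n) ℂ)
    (h₁ : x₁.trace = 0) (h₂ : x₂.trace = 0) (h₃ : x₃.trace = 0) :
    -gammaCochain n x₂ (x₁ * x₃ - x₃ * x₁) + gammaCochain n x₁ (x₂ * x₃ - x₃ * x₂) -
        gammaCochain n (x₁ * x₂ - x₂ * x₁) x₃ =
      2 * Complex.I *
        (qHerm n x₁ * (qHerm n x₂ * qHerm n x₃ - qHerm n x₃ * qHerm n x₂)).trace := by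
  have cyc : ∀ X Y Z : Matrix (Fin n) (Fin n) ℂ,
      (X * (Y * Z)).trace = (Y * (Z * X)).trace := by
    intro X Y Z
    rw [Matrix.trace_mul_comm, mul_assoc]
  simp only [gammaCochain, pSkew, qHerm, conjTranspose_sub, conjTranspose_add,
    conjTranspose_mul, smul_sub, smul_add, Matrix.smul_mul, Matrix.mul_smul,
    mul_sub, sub_mul, mul_add, add_mul, trace_sub, trace_add, trace_smul, smul_eq_mul,
    mul_assoc]
  simp only [cyc x₂, cyc x₂ᴴ]
  simp only [cyc x₃, cyc x₃ᴴ]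
  ring
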